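/- Let p ≥ 3 be an odd integer. For every integer N ≥ p+2 there exists a real polynomial g ∈ ℝ[x,y] with non-negative coefficients such that g(x,y) = 1 whenever x + y = 1, every pair (a,b) ∈ ℕ² in the support of g satisfies p ∣ a + 2b, and the support of g has exactly N elements. -/

import Mathlib

open MvPolynomial

/-- Coefficients of the Lucas-type polynomials: `L n = ∑ t, Cc n t • x^(n-2t) y^t`
satisfying `L 0 = 2`, `L 1 = x`, `L (n+2) = x * L (n+1) + y * L n`. -/
noncomputable def Cc : ℕ → ℕ → ℝ
  | 0, 0 => 2
  | 0, _+1 => 0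
  | 1, 0 => 1
  | 1, _+1 => 0
  | n+2, 0 => Cc (n+1) 0
  | n+2, t+1 => Cc (n+1) (t+1) + Cc n t

theorem Cc_nonneg : ∀ n t, 0 ≤ Cc n t
  | 0, 0 => by norm_num [Cc]
  | 0, _+1 => by norm_num [Cc]
  | 1, 0 => by norm_num [Cc]
  | 1, _+1 => by norm_num [Cc]
  | n+2, 0 => by rw [show Cc (n+2) 0 = Cc (n+1) 0 from rfl]; exact Cc_nonneg (n+1) 0
  | n+2, t+1 => by
      rw [show Cc (n+2) (t+1) = Cc (n+1) (t+1) + Cc n t from rfl]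
      exact add_nonneg (Cc_nonneg (n+1) (t+1)) (Cc_nonneg n t)

theorem Cc_eq_zero : ∀ n t, n < 2*t → Cc n t = 0
  | 0, 0 => by omega
  | 0, _+1 => fun _ => rfl
  | 1, 0 => by omega
  | 1, _+1 => fun _ => rfl
  | n+2, 0 => by omega
  | n+2, t+1 => fun h => by
      rw [show Cc (n+2) (t+1) = Cc (n+1) (t+1) + Cc n t from rfl,
        Cc_eq_zero (n+1) (t+1) (by omega), Cc_eq_zero n t (by omega), add_zero]

theorem Cc_pos : ∀ n t, 2*t ≤ n → 0 < Cc n t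
  | 0, 0 => fun _ => by norm_num [Cc]
  | 0, _+1 => by omega
  | 1, 0 => fun _ => by norm_num [Cc]
  | 1, _+1 => by omega
  | n+2, 0 => fun _ => by
      rw [show Cc (n+2) 0 = Cc (n+1) 0 from rfl]; exact Cc_pos (n+1) 0 (by omega)
  | n+2, t+1 => fun h => by
      rw [show Cc (n+2) (t+1) = Cc (n+1) (t+1) + Cc n t from rfl]
      have h1 := Cc_nonneg (n+1) (t+1)
      have h2 := Cc_pos n t (by omega)
      linarith

theorem Cc_eval : ∀ n, ∀ x y : ℝ, x + y = 1 →
    ∑ t ∈ Finset.range (n+1), Cc n t * x^(n - 2*t) * y^t = 1 + (x-1)^n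
  | 0 => fun x y _ => by norm_num [Cc]
  | 1 => fun x y _ => by
      rw [Finset.sum_range_succ, Finset.sum_range_one]
      norm_num [Cc]
  | n+2 => fun x y hxy => by
      have IH1 := Cc_eval (n+1) x y hxy
      have IH0 := Cc_eval n x y hxy
      rw [Finset.sum_range_succ'
        (fun t => Cc (n+2) t * x^(n+2 - 2*t) * y^t) (n+2)]
      have hsplit : ∀ s, Cc (n+2) (s+1) * x^(n+2 - 2*(s+1)) * y^(s+1)
          = Cc (n+1) (s+1) * x^(n+2 - 2*(s+1)) * y^(s+1)
            + Cc n s * x^(n - 2*s) * y^(s+1) := by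
        intro s
        rw [show Cc (n+2) (s+1) = Cc (n+1) (s+1) + Cc n s from rfl]
        rw [show n+2 - 2*(s+1) = n - 2*s by omega]
        ring
      rw [Finset.sum_congr rfl (fun s _ => hsplit s), Finset.sum_add_distrib]
      -- second sum = y * (1 + (x-1)^n)
      have h2 : ∑ s ∈ Finset.range (n+2), Cc n s * x^(n - 2*s) * y^(s+1)
          = y * (1 + (x-1)^n) := by
        rw [Finset.sum_range_succ, Cc_eq_zero n (n+1) (by omega)]
        have : ∀ s, Cc n s * x^(n-2*s) * y^(s+1) = y * (Cc n s * x^(n-2*s) * y^s) := by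
          intro s; rw [pow_succ]; ring
        rw [Finset.sum_congr rfl (fun s _ => this s)]
        rw [← Finset.mul_sum, IH0]
        ring
      -- first sum + head term = x * (1 + (x-1)^(n+1))
      have h1 : (∑ s ∈ Finset.range (n+2), Cc (n+1) (s+1) * x^(n+2 - 2*(s+1)) * y^(s+1))
          + Cc (n+2) 0 * x^(n+2-2*0) * y^0
          = x * (1 + (x-1)^(n+1)) := by
        rw [← IH1, Finset.sum_range_succ'
          (fun t => Cc (n+1) t * x^(n+1 - 2*t) * y^t) (n+1), mul_add,
          Finset.mul_sum]
        rw [Finset.sum_range_succ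
          (fun s => Cc (n+1) (s+1) * x^(n+2 - 2*(s+1)) * y^(s+1)) (n+1)]
        rw [Cc_eq_zero (n+1) (n+2) (by omega)]
        have hterm : ∀ s, Cc (n+1) (s+1) * x^(n+2 - 2*(s+1)) * y^(s+1)
            = x * (Cc (n+1) (s+1) * x^(n+1 - 2*(s+1)) * y^(s+1)) := by
          intro s
          by_cases hs : 2*(s+1) ≤ n+1
          · rw [show n+2 - 2*(s+1) = (n+1 - 2*(s+1)) + 1 by omega, pow_succ]
            ring
          · rw [Cc_eq_zero (n+1) (s+1) (by omega)]; ring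
        have hhead : Cc (n+2) 0 * x^(n+2-2*0) * y^0 = x * (Cc (n+1) 0 * x^(n+1-2*0) * y^0) := by
          rw [show Cc (n+2) 0 = Cc (n+1) 0 from rfl,
            show n+2-2*0 = (n+1-2*0)+1 by omega, pow_succ]
          ring
        rw [Finset.sum_congr rfl (fun s _ => hterm s), hhead]
        ring
      rw [add_right_comm, h1, h2]
      have hy : y = 1 - x := by linarith
      subst hy
      rw [show (n+2) = n + 1 + 1 from rfl, pow_succ, pow_succ]
      ring
/-- The exponent `(a, b)` as a finitely supported function on `Fin 2`. -/
noncomputable def ee (a b : ℕ) : Fin 2 →₀ ℕ :=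
  Finsupp.single 0 a + Finsupp.single 1 b

theorem ee_apply0 (a b : ℕ) : ee a b 0 = a := by
  simp [ee, Finsupp.single_apply]

theorem ee_apply1 (a b : ℕ) : ee a b 1 = b := by
  simp [ee, Finsupp.single_apply]

theorem eval_monomial_ee (x y : ℝ) (a b : ℕ) (r : ℝ) :
    eval ![x, y] (monomial (ee a b) r) = r * x^a * y^b := by
  rw [eval_monomial, Finsupp.prod_fintype _ _ (fun i => pow_zero _), Fin.prod_univ_two]
  rw [ee_apply0, ee_apply1]
  norm_num
  ring

theorem support_sum_monomial {ι : Type} (T : Finset ι) (φ : ι → (Fin 2 →₀ ℕ)) (c : ι → ℝ)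
    (hinj : Set.InjOn φ T) (hpos : ∀ i ∈ T, 0 < c i) :
    (∑ i ∈ T, (monomial (φ i) (c i) : MvPolynomial (Fin 2) ℝ)).support = T.image φ := by
  ext α
  rw [MvPolynomial.mem_support_iff, coeff_sum]
  simp only [coeff_monomial]
  constructor
  · intro h
    obtain ⟨i, hiT, hne⟩ := Finset.exists_ne_zero_of_sum_ne_zero h
    refine Finset.mem_image.mpr ⟨i, hiT, ?_⟩
    by_contra hne2
    exact hne (if_neg hne2)
  · intro h
    obtain ⟨i, hiT, rfl⟩ := Finset.mem_image.mp h
    rw [Finset.sum_eq_single_of_mem i hiT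
      (fun j hjT hji => if_neg (fun hc => hji (hinj hjT hiT hc)))]
    rw [if_pos rfl]
    exact (hpos i hiT).ne'

theorem support_add_eq' (f g : MvPolynomial (Fin 2) ℝ)
    (h : Disjoint f.support g.support) :
    (f + g).support = f.support ∪ g.support := by
  ext α
  simp only [MvPolynomial.mem_support_iff, Finset.mem_union, coeff_add]
  constructor
  · intro hne
    by_contra hc
    push_neg at hc
    rw [hc.1, hc.2, add_zero] at hne
    exact hne rfl
  · intro hor
    rcases hor with h1 | h2
    · have hg0 : g.coeff α = 0 := by
        by_contra hg
        exact (Finset.disjoint_left.mp h) (MvPolynomial.mem_support_iff.mpr h1)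
          (MvPolynomial.mem_support_iff.mpr hg)
      rw [hg0, add_zero]; exact h1
    · have hf0 : f.coeff α = 0 := by
        by_contra hf
        exact (Finset.disjoint_left.mp h) (MvPolynomial.mem_support_iff.mpr hf)
          (MvPolynomial.mem_support_iff.mpr h2)
      rw [hf0, zero_add]; exact h2
/-! ### The construction -/

/-- The two tensored offsets `{0, d}`. -/
def KK (d : ℕ) : Finset ℕ := {0, d}

/-- Row `t`-index sets. -/
def RR (q B d m : ℕ) : Finset ℕ :=
  if m = B+1 then KK d
  else if m = B then Finset.range (q+1) \ KK d
  else Finset.range (q+1)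

/-- Index set for the "odd" part of the polynomial. -/
def TA (q B d : ℕ) : Finset (ℕ × ℕ) :=
  (Finset.range (B+2)).biUnion fun m => {m} ×ˢ RR q B d m

/-- Coefficients for the "class two" block. -/
noncomputable def DD (q d s : ℕ) : ℝ :=
  ∑ t ∈ KK d, Cc (2*q+1) t * (if t ≤ s then Cc (2*q+1) (s-t) else 0)

noncomputable def gA (q B d : ℕ) : MvPolynomial (Fin 2) ℝ :=
  ∑ mt ∈ TA q B d,
    monomial (ee ((2*q+1) - 2*mt.2) (mt.2 + (2*q+1)*mt.1)) (Cc (2*q+1) mt.2)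

noncomputable def gB (q B d : ℕ) : MvPolynomial (Fin 2) ℝ :=
  ∑ s ∈ Finset.range (q+d+1),
    monomial (ee (2*(2*q+1) - 2*s) (s + (2*q+1)*B)) (DD q d s)

noncomputable def gC (q B : ℕ) : MvPolynomial (Fin 2) ℝ :=
  monomial (ee 0 ((2*q+1)*(B+1))) (1:ℝ)

noncomputable def gg (q B d : ℕ) : MvPolynomial (Fin 2) ℝ :=
  gA q B d + gB q B d + gC q B

theorem KK_subset (q d : ℕ) (hd : d ≤ q) : KK d ⊆ Finset.range (q+1) := by
  intro t ht
  rcases Finset.mem_insert.mp ht with h | h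
  · subst h; exact Finset.mem_range.mpr (by omega)
  · rw [Finset.mem_singleton] at h; subst h; exact Finset.mem_range.mpr (by omega)

theorem RR_subset (q B d m : ℕ) (hd : d ≤ q) : RR q B d m ⊆ Finset.range (q+1) := by
  unfold RR
  split
  · exact KK_subset q d hd
  · split
    · exact Finset.sdiff_subset
    · exact subset_rfl

theorem TA_mem {q B d : ℕ} {mt : ℕ × ℕ} (h : mt ∈ TA q B d) :
    mt.1 < B + 2 ∧ mt.2 ∈ RR q B d mt.1 := by
  obtain ⟨m, hm, hmem⟩ := Finset.mem_biUnion.mp h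
  rw [Finset.mem_product, Finset.mem_singleton] at hmem
  obtain ⟨h1, h2⟩ := hmem
  subst h1
  exact ⟨Finset.mem_range.mp hm, h2⟩

theorem TA_snd_le {q B d : ℕ} {mt : ℕ × ℕ} (hd : d ≤ q) (h : mt ∈ TA q B d) :
    mt.2 ≤ q := by
  have := RR_subset q B d mt.1 hd (TA_mem h).2
  exact Nat.lt_succ_iff.mp (Finset.mem_range.mp this)

/-- Decomposing `t + p*m` with `t < p`. -/
theorem pm_inj {p t m t' m' : ℕ} (hp : t < p) (hp' : t' < p)
    (h : t + p*m = t' + p*m') : t = t' ∧ m = m' := by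
  have h1 : (t + p*m) % p = t := by
    rw [Nat.add_mul_mod_self_left]; exact Nat.mod_eq_of_lt hp
  have h2 : (t' + p*m') % p = t' := by
    rw [Nat.add_mul_mod_self_left]; exact Nat.mod_eq_of_lt hp'
  have ht : t = t' := by rw [← h1, ← h2, h]
  subst ht
  refine ⟨rfl, ?_⟩
  have hpm : p * m = p * m' := by omega
  exact Nat.eq_of_mul_eq_mul_left (by omega) hpm

theorem gA_support (q B d : ℕ) (hd : d ≤ q) :
    (gA q B d).support
      = (TA q B d).image (fun mt => ee ((2*q+1) - 2*mt.2) (mt.2 + (2*q+1)*mt.1)) := by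
  apply support_sum_monomial
  · intro mt hmt mt' hmt' heq
    have h1 : mt.2 + (2*q+1)*mt.1 = mt'.2 + (2*q+1)*mt'.1 := by
      have := congrArg (fun f : Fin 2 →₀ ℕ => f 1) heq
      simpa [ee_apply1] using this
    have ht : mt.2 < 2*q+1 := by have := TA_snd_le hd hmt; omega
    have ht' : mt'.2 < 2*q+1 := by have := TA_snd_le hd hmt'; omega
    obtain ⟨e1, e2⟩ := pm_inj ht ht' h1
    exact Prod.ext e2 e1
  · intro mt hmt
    exact Cc_pos _ _ (by have := TA_snd_le hd hmt; omega)

theorem DD_nonneg (q d s : ℕ) : 0 ≤ DD q d s := by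
  apply Finset.sum_nonneg
  intro t _
  apply mul_nonneg (Cc_nonneg _ _)
  split
  · exact Cc_nonneg _ _
  · exact le_refl 0

theorem DD_pos (q d s : ℕ) (hd : d ≤ q) (hs : s ≤ q + d) : 0 < DD q d s := by
  unfold DD
  by_cases hsq : s ≤ q
  · apply Finset.sum_pos'
    · intro t _
      apply mul_nonneg (Cc_nonneg _ _)
      split
      · exact Cc_nonneg _ _
      · exact le_refl 0
    · refine ⟨0, Finset.mem_insert_self _ _, ?_⟩
      rw [if_pos (Nat.zero_le s)]
      exact mul_pos (Cc_pos _ _ (by omega)) (Cc_pos _ _ (by omega))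
  · apply Finset.sum_pos'
    · intro t _
      apply mul_nonneg (Cc_nonneg _ _)
      split
      · exact Cc_nonneg _ _
      · exact le_refl 0
    · refine ⟨d, Finset.mem_insert_of_mem (Finset.mem_singleton_self d), ?_⟩
      rw [if_pos (by omega)]
      exact mul_pos (Cc_pos _ _ (by omega)) (Cc_pos _ _ (by omega))

theorem gB_support (q B d : ℕ) (hd : d ≤ q) :
    (gB q B d).support
      = (Finset.range (q+d+1)).image
          (fun s => ee (2*(2*q+1) - 2*s) (s + (2*q+1)*B)) := by
  apply support_sum_monomial
  · intro s hs s' hs' heq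
    have h1 : s + (2*q+1)*B = s' + (2*q+1)*B := by
      have := congrArg (fun f : Fin 2 →₀ ℕ => f 1) heq
      simpa [ee_apply1] using this
    omega
  · intro s hs
    exact DD_pos q d s hd (by have := Finset.mem_range.mp hs; omega)

theorem gC_support (q B : ℕ) :
    (gC q B).support = {ee 0 ((2*q+1)*(B+1))} := by
  unfold gC
  rw [support_monomial, if_neg (one_ne_zero)]
theorem gg_support (q B d : ℕ) (hd : d ≤ q) :
    (gg q B d).support
      = ((TA q B d).image (fun mt => ee ((2*q+1) - 2*mt.2) (mt.2 + (2*q+1)*mt.1)))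
        ∪ ((Finset.range (q+d+1)).image
            (fun s => ee (2*(2*q+1) - 2*s) (s + (2*q+1)*B)))
        ∪ {ee 0 ((2*q+1)*(B+1))} := by
  have hAB : Disjoint (gA q B d).support (gB q B d).support := by
    rw [gA_support q B d hd, gB_support q B d hd]
    rw [Finset.disjoint_left]
    rintro α hA hB
    obtain ⟨mt, hmt, rfl⟩ := Finset.mem_image.mp hA
    obtain ⟨s, hs, hse⟩ := Finset.mem_image.mp hB
    have h0 := congrArg (fun f : Fin 2 →₀ ℕ => f 0) hse
    simp only [ee_apply0] at h0
    have ht := TA_snd_le hd hmt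
    have hsr := Finset.mem_range.mp hs
    omega
  have hABC : Disjoint ((gA q B d).support ∪ (gB q B d).support) (gC q B).support := by
    rw [gA_support q B d hd, gB_support q B d hd, gC_support]
    rw [Finset.disjoint_left]
    rintro α hAB hC
    rw [Finset.mem_singleton] at hC
    subst hC
    rcases Finset.mem_union.mp hAB with hA | hB
    · obtain ⟨mt, hmt, he⟩ := Finset.mem_image.mp hA
      have h0 := congrArg (fun f : Fin 2 →₀ ℕ => f 0) he
      simp only [ee_apply0] at h0
      have ht := TA_snd_le hd hmt
      omega
    · obtain ⟨s, hs, he⟩ := Finset.mem_image.mp hB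
      have h0 := congrArg (fun f : Fin 2 →₀ ℕ => f 0) he
      simp only [ee_apply0] at h0
      have hsr := Finset.mem_range.mp hs
      omega
  rw [gg, support_add_eq' _ _ (by rwa [support_add_eq' _ _ hAB]),
    support_add_eq' _ _ hAB, gA_support q B d hd, gB_support q B d hd, gC_support]

theorem TA_card (q B d : ℕ) (hd : d ≤ q) : (TA q B d).card = (B+1)*(q+1) := by
  unfold TA
  rw [Finset.card_biUnion]
  · have hrow : ∀ m, ({m} ×ˢ RR q B d m).card = (RR q B d m).card := by
      intro m
      rw [Finset.card_product, Finset.card_singleton, one_mul]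
    rw [Finset.sum_congr rfl (fun m _ => hrow m)]
    have hKcard : (KK d).card ≤ q + 1 := by
      calc (KK d).card ≤ (Finset.range (q+1)).card :=
            Finset.card_le_card (KK_subset q d hd)
        _ = q + 1 := Finset.card_range _
    rw [Finset.sum_range_succ, Finset.sum_range_succ]
    have h1 : RR q B d (B+1) = KK d := by unfold RR; rw [if_pos rfl]
    have h2 : RR q B d B = Finset.range (q+1) \ KK d := by
      unfold RR; rw [if_neg (by omega), if_pos rfl]
    have h3 : ∀ m ∈ Finset.range B, (RR q B d m).card = q + 1 := by
      intro m hm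
      have hmB := Finset.mem_range.mp hm
      unfold RR
      rw [if_neg (by omega), if_neg (by omega), Finset.card_range]
    rw [h1, h2, Finset.card_sdiff_of_subset (KK_subset q d hd), Finset.card_range,
      Finset.sum_congr rfl h3, Finset.sum_const, smul_eq_mul, Finset.card_range]
    have hexp : (B+1)*(q+1) = B*(q+1)+(q+1) := by ring
    omega
  · intro m hm m' hm' hne
    simp only [Function.onFun]
    rw [Finset.disjoint_left]
    rintro ⟨a, b⟩ h1 h2
    rw [Finset.mem_product, Finset.mem_singleton] at h1 h2
    exact hne (h1.1 ▸ h2.1 ▸ rfl)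

theorem gg_card (q B d : ℕ) (hd : d ≤ q) :
    (gg q B d).support.card = (B+2)*(q+1) + d + 1 := by
  rw [gg_support q B d hd]
  have hd1 : Disjoint
      ((TA q B d).image (fun mt => ee ((2*q+1) - 2*mt.2) (mt.2 + (2*q+1)*mt.1)))
      ((Finset.range (q+d+1)).image
        (fun s => ee (2*(2*q+1) - 2*s) (s + (2*q+1)*B))) := by
    rw [Finset.disjoint_left]
    rintro α hA hB
    obtain ⟨mt, hmt, rfl⟩ := Finset.mem_image.mp hA
    obtain ⟨s, hs, hse⟩ := Finset.mem_image.mp hB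
    have h0 := congrArg (fun f : Fin 2 →₀ ℕ => f 0) hse
    simp only [ee_apply0] at h0
    have ht := TA_snd_le hd hmt
    have hsr := Finset.mem_range.mp hs
    omega
  have hd2 : Disjoint
      (((TA q B d).image (fun mt => ee ((2*q+1) - 2*mt.2) (mt.2 + (2*q+1)*mt.1)))
        ∪ ((Finset.range (q+d+1)).image
            (fun s => ee (2*(2*q+1) - 2*s) (s + (2*q+1)*B))))
      ({ee 0 ((2*q+1)*(B+1))} : Finset (Fin 2 →₀ ℕ)) := by
    rw [Finset.disjoint_left]
    rintro α hAB hC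
    rw [Finset.mem_singleton] at hC
    subst hC
    rcases Finset.mem_union.mp hAB with hA | hB
    · obtain ⟨mt, hmt, he⟩ := Finset.mem_image.mp hA
      have h0 := congrArg (fun f : Fin 2 →₀ ℕ => f 0) he
      simp only [ee_apply0] at h0
      have ht := TA_snd_le hd hmt
      omega
    · obtain ⟨s, hs, he⟩ := Finset.mem_image.mp hB
      have h0 := congrArg (fun f : Fin 2 →₀ ℕ => f 0) he
      simp only [ee_apply0] at h0
      have hsr := Finset.mem_range.mp hs
      omega
  rw [Finset.card_union_of_disjoint hd2, Finset.card_union_of_disjoint hd1]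
  have hcA : ((TA q B d).image
      (fun mt => ee ((2*q+1) - 2*mt.2) (mt.2 + (2*q+1)*mt.1))).card
      = (B+1)*(q+1) := by
    rw [Finset.card_image_of_injOn, TA_card q B d hd]
    intro mt hmt mt' hmt' heq
    have h1 : mt.2 + (2*q+1)*mt.1 = mt'.2 + (2*q+1)*mt'.1 := by
      have := congrArg (fun f : Fin 2 →₀ ℕ => f 1) heq
      simpa [ee_apply1] using this
    have ht : mt.2 < 2*q+1 := by
      have := TA_snd_le hd (by exact hmt); omega
    have ht' : mt'.2 < 2*q+1 := by
      have := TA_snd_le hd (by exact hmt'); omega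
    obtain ⟨e1, e2⟩ := pm_inj ht ht' h1
    exact Prod.ext e2 e1
  have hcB : ((Finset.range (q+d+1)).image
      (fun s => ee (2*(2*q+1) - 2*s) (s + (2*q+1)*B))).card = q+d+1 := by
    rw [Finset.card_image_of_injOn, Finset.card_range]
    intro s hs s' hs' heq
    have := congrArg (fun f : Fin 2 →₀ ℕ => f 1) heq
    simp only [ee_apply1] at this
    omega
  rw [hcA, hcB, Finset.card_singleton]
  have hexp : (B+2)*(q+1) = (B+1)*(q+1)+(q+1) := by ring
  omega

theorem gg_coeff_nonneg (q B d : ℕ) (α : Fin 2 →₀ ℕ) : 0 ≤ (gg q B d).coeff α := by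
  unfold gg gA gB gC
  simp only [coeff_add, coeff_sum, coeff_monomial]
  have h1 : (0:ℝ) ≤ ∑ mt ∈ TA q B d,
      (if ee ((2*q+1) - 2*mt.2) (mt.2 + (2*q+1)*mt.1) = α then Cc (2*q+1) mt.2 else 0) := by
    apply Finset.sum_nonneg
    intro mt _
    split
    · exact Cc_nonneg _ _
    · exact le_refl 0
  have h2 : (0:ℝ) ≤ ∑ s ∈ Finset.range (q+d+1),
      (if ee (2*(2*q+1) - 2*s) (s + (2*q+1)*B) = α then DD q d s else 0) := by
    apply Finset.sum_nonneg
    intro s _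
    split
    · exact DD_nonneg q d s
    · exact le_refl 0
  have h3 : (0:ℝ) ≤ (if ee 0 ((2*q+1)*(B+1)) = α then (1:ℝ) else 0) := by
    split
    · norm_num
    · exact le_refl 0
  linarith

theorem gg_dvd (q B d : ℕ) (hd : d ≤ q) :
    ∀ α ∈ (gg q B d).support, (2*q+1) ∣ α 0 + 2 * α 1 := by
  intro α hα
  rw [gg_support q B d hd] at hα
  rcases Finset.mem_union.mp hα with hAB | hC
  · rcases Finset.mem_union.mp hAB with hA | hB
    · obtain ⟨mt, hmt, rfl⟩ := Finset.mem_image.mp hA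
      rw [ee_apply0, ee_apply1]
      have ht := TA_snd_le hd hmt
      refine ⟨2*mt.1 + 1, ?_⟩
      have : (2*q+1)*mt.1 + (2*q+1)*mt.1 + (2*q+1) = (2*q+1) * (2*mt.1+1) := by ring
      omega
    · obtain ⟨s, hs, rfl⟩ := Finset.mem_image.mp hB
      rw [ee_apply0, ee_apply1]
      have hsr := Finset.mem_range.mp hs
      refine ⟨2*B + 2, ?_⟩
      have : (2*q+1)*B + (2*q+1)*B + ((2*q+1) + (2*q+1)) = (2*q+1) * (2*B+2) := by ring
      omega
  · rw [Finset.mem_singleton] at hC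
    subst hC
    rw [ee_apply0, ee_apply1]
    exact ⟨2*(B+1), by ring⟩
theorem conv_eval (q d t : ℕ) (hd : d ≤ q) (ht : t ≤ d) (x y : ℝ) :
    (∑ s ∈ Finset.range (q+d+1),
      (if t ≤ s then Cc (2*q+1) (s-t) else 0) * x^(2*(2*q+1) - 2*s) * y^s)
      = (x^((2*q+1)-2*t) * y^t)
        * (∑ u ∈ Finset.range (q+1), Cc (2*q+1) u * x^((2*q+1)-2*u) * y^u) := by
  have hinj : Set.InjOn (fun u => u + t) ↑(Finset.range (q+1)) := by
    intro a _ b _ hab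
    simp only at hab
    omega
  have himg : Finset.image (fun u => u + t) (Finset.range (q+1))
      ⊆ Finset.range (q+d+1) := by
    intro s hs
    obtain ⟨u, hu, rfl⟩ := Finset.mem_image.mp hs
    have := Finset.mem_range.mp hu
    exact Finset.mem_range.mpr (by omega)
  have hzero : ∀ s ∈ Finset.range (q+d+1),
      s ∉ Finset.image (fun u => u + t) (Finset.range (q+1)) →
      (if t ≤ s then Cc (2*q+1) (s-t) else 0) * x^(2*(2*q+1) - 2*s) * y^s = 0 := by
    intro s _ hnot
    by_cases hts : t ≤ s
    · have hbig : q + 1 ≤ s - t := by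
        by_contra hsmall
        exact hnot (Finset.mem_image.mpr ⟨s - t, Finset.mem_range.mpr (by omega),
          by omega⟩)
      rw [if_pos hts, Cc_eq_zero (2*q+1) (s-t) (by omega)]
      ring
    · rw [if_neg hts]; ring
  rw [← Finset.sum_subset himg hzero, Finset.sum_image hinj]
  rw [Finset.mul_sum]
  apply Finset.sum_congr rfl
  intro u hu
  have huq := Finset.mem_range.mp hu
  rw [if_pos (by omega : t ≤ u + t), show u + t - t = u by omega]
  rw [show 2*(2*q+1) - 2*(u+t) = ((2*q+1)-2*t) + ((2*q+1)-2*u) by omega]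
  rw [pow_add, pow_add]
  ring

theorem gg_eval (q B d : ℕ) (hd : d ≤ q) (x y : ℝ) (hxy : x + y = 1) :
    eval ![x, y] (gg q B d) = 1 := by
  have hpair : (↑(Finset.range (B+2)) : Set ℕ).PairwiseDisjoint
      (fun m => ({m} ×ˢ RR q B d m : Finset (ℕ×ℕ))) := by
    intro a _ b _ hab
    simp only [Function.onFun]
    rw [Finset.disjoint_left]
    rintro ⟨u, v⟩ h1 h2
    rw [Finset.mem_product, Finset.mem_singleton] at h1 h2
    exact hab (h1.1 ▸ h2.1 ▸ rfl)
  -- the Lucas value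
  have hL : (∑ t ∈ Finset.range (q+1), Cc (2*q+1) t * x^((2*q+1) - 2*t) * y^t)
      = 1 - y^(2*q+1) := by
    have hfull := Cc_eval (2*q+1) x y hxy
    have hsub : ∑ t ∈ Finset.range (2*q+1+1), Cc (2*q+1) t * x^((2*q+1)-2*t) * y^t
        = ∑ t ∈ Finset.range (q+1), Cc (2*q+1) t * x^((2*q+1)-2*t) * y^t := by
      refine (Finset.sum_subset (Finset.range_subset_range.mpr (by omega)) ?_).symm
      intro u hu hnu
      have h1 := Finset.mem_range.mp hu
      have h2 : ¬ (u < q+1) := fun h => hnu (Finset.mem_range.mpr h)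
      rw [Cc_eq_zero (2*q+1) u (by omega)]
      ring
    rw [← hsub, hfull]
    have hx1 : x - 1 = -y := by linarith
    rw [hx1, Odd.neg_pow ⟨q, by ring⟩]
    ring
  -- evaluation of the three parts
  have hC : eval ![x, y] (gC q B) = (y^(2*q+1))^(B+1) := by
    unfold gC
    rw [eval_monomial_ee, ← pow_mul]
    norm_num
  have hA : eval ![x, y] (gA q B d)
      = (∑ m ∈ Finset.range B,
          (∑ t ∈ Finset.range (q+1), Cc (2*q+1) t * x^((2*q+1)-2*t) * y^t)
            * (y^(2*q+1))^m)
        + ((∑ t ∈ Finset.range (q+1), Cc (2*q+1) t * x^((2*q+1)-2*t) * y^t)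
            - (∑ t ∈ KK d, Cc (2*q+1) t * x^((2*q+1)-2*t) * y^t)) * (y^(2*q+1))^B
        + (∑ t ∈ KK d, Cc (2*q+1) t * x^((2*q+1)-2*t) * y^t) * (y^(2*q+1))^(B+1) := by
    unfold gA
    rw [map_sum]
    rw [Finset.sum_congr rfl (fun mt _ => eval_monomial_ee x y _ _ _)]
    unfold TA
    rw [Finset.sum_biUnion hpair]
    have hrow : ∀ m, (∑ mt ∈ ({m} ×ˢ RR q B d m : Finset (ℕ×ℕ)),
          Cc (2*q+1) mt.2 * x^((2*q+1)-2*mt.2) * y^(mt.2+(2*q+1)*mt.1))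
        = (∑ t ∈ RR q B d m, Cc (2*q+1) t * x^((2*q+1)-2*t) * y^t)
            * (y^(2*q+1))^m := by
      intro m
      rw [Finset.sum_product, Finset.sum_singleton, Finset.sum_mul]
      apply Finset.sum_congr rfl
      intro t _
      rw [pow_add, pow_mul]
      ring
    rw [Finset.sum_congr rfl (fun m _ => hrow m)]
    rw [Finset.sum_range_succ, Finset.sum_range_succ]
    have h1 : RR q B d (B+1) = KK d := by unfold RR; rw [if_pos rfl]
    have h2 : RR q B d B = Finset.range (q+1) \ KK d := by
      unfold RR; rw [if_neg (by omega), if_pos rfl]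
    have h3 : ∀ m ∈ Finset.range B, RR q B d m = Finset.range (q+1) := by
      intro m hm
      have := Finset.mem_range.mp hm
      unfold RR; rw [if_neg (by omega), if_neg (by omega)]
    have hsd : (∑ t ∈ Finset.range (q+1) \ KK d,
          Cc (2*q+1) t * x^((2*q+1)-2*t) * y^t)
        = (∑ t ∈ Finset.range (q+1), Cc (2*q+1) t * x^((2*q+1)-2*t) * y^t)
          - (∑ t ∈ KK d, Cc (2*q+1) t * x^((2*q+1)-2*t) * y^t) :=
      eq_sub_of_add_eq (Finset.sum_sdiff (KK_subset q d hd))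
    rw [h1, h2, hsd]
    rw [Finset.sum_congr rfl (fun m hm => by rw [h3 m hm])]
  have hB : eval ![x, y] (gB q B d)
      = (∑ t ∈ KK d, Cc (2*q+1) t * x^((2*q+1)-2*t) * y^t)
        * (∑ u ∈ Finset.range (q+1), Cc (2*q+1) u * x^((2*q+1)-2*u) * y^u)
        * (y^(2*q+1))^B := by
    unfold gB
    rw [map_sum]
    rw [Finset.sum_congr rfl (fun s _ => eval_monomial_ee x y _ _ _)]
    have hstep : ∀ s, DD q d s * x^(2*(2*q+1) - 2*s) * y^(s + (2*q+1)*B)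
        = (∑ t ∈ KK d, Cc (2*q+1) t
            * ((if t ≤ s then Cc (2*q+1) (s-t) else 0) * x^(2*(2*q+1)-2*s) * y^s))
          * (y^(2*q+1))^B := by
      intro s
      rw [DD, Finset.sum_mul, Finset.sum_mul, Finset.sum_mul]
      apply Finset.sum_congr rfl
      intro t _
      rw [pow_add, pow_mul]
      ring
    rw [Finset.sum_congr rfl (fun s _ => hstep s)]
    rw [← Finset.sum_mul]
    rw [Finset.sum_comm]
    have hinner : ∀ t ∈ KK d,
        (∑ s ∈ Finset.range (q+d+1), Cc (2*q+1) t
          * ((if t ≤ s then Cc (2*q+1) (s-t) else 0) * x^(2*(2*q+1)-2*s) * y^s))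
        = Cc (2*q+1) t * x^((2*q+1)-2*t) * y^t
          * (∑ u ∈ Finset.range (q+1), Cc (2*q+1) u * x^((2*q+1)-2*u) * y^u) := by
      intro t htK
      have htd : t ≤ d := by
        rcases Finset.mem_insert.mp htK with h | h
        · omega
        · rw [Finset.mem_singleton] at h; omega
      rw [← Finset.mul_sum, conv_eval q d t hd htd x y]
      ring
    rw [Finset.sum_congr rfl hinner]
    rw [← Finset.sum_mul]
  -- put the three pieces together
  rw [gg, map_add, map_add, hA, hB, hC]
  rw [hL, ← Finset.mul_sum]
  have hgeom := geom_sum_mul (y^(2*q+1)) (B+1)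
  rw [Finset.sum_range_succ] at hgeom
  linear_combination -hgeom
/-- For every odd `p ≥ 3` and every `N ≥ p+2`, there is a real polynomial in two
variables with non-negative coefficients, equal to `1` on the line `x + y = 1`,
whose support consists of pairs `(a,b)` with `p ∣ a + 2b`, and whose support has
exactly `N` elements. -/
theorem stmt_1 (p : ℕ) (hp : 3 ≤ p) (hodd : Odd p) (N : ℕ) (hN : p + 2 ≤ N) :
    ∃ g : MvPolynomial (Fin 2) ℝ,
      (∀ α, 0 ≤ g.coeff α) ∧
      (∀ x y : ℝ, x + y = 1 → eval ![x, y] g = 1) ∧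
      (∀ α ∈ g.support, p ∣ α 0 + 2 * α 1) ∧
      g.support.card = N := by
  obtain ⟨q, hq⟩ := hodd
  have hq1 : 1 ≤ q := by omega
  set c := (N-1)/(q+1) with hcdef
  have hc : 2 ≤ c := by
    rw [hcdef]
    exact (Nat.le_div_iff_mul_le (by omega : 0 < q+1)).mpr (by omega)
  set B := c - 2 with hBdef
  set d := (N-1) % (q+1) with hddef
  have hd : d ≤ q := by
    have := Nat.mod_lt (N-1) (show 0 < q+1 by omega)
    omega
  have hdm : (q+1)*c + d = N-1 := Nat.div_add_mod (N-1) (q+1)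
  have hcard : (B+2)*(q+1) + d + 1 = N := by
    have hB2 : B + 2 = c := by omega
    rw [hB2]
    have hmc : c*(q+1) = (q+1)*c := by ring
    omega
  refine ⟨gg q B d, gg_coeff_nonneg q B d, ?_, ?_, ?_⟩
  · intro x y hxy
    exact gg_eval q B d hd x y hxy
  · rw [hq]
    exact gg_dvd q B d hd
  · rw [gg_card q B d hd, hcard]
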